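/- Let γ>1, k>0, ρ₀>0 be constants and S : ℝ→ℝ a C¹ function. Suppose M, D, A : ℝ×ℝ→ℝ are C¹ with M>0, S−A>0, satisfying ∂ₜM+∂ₓD=0 and ∂ₜD+∂ₓ(D²/M + M c_a²/γ) = (M c_a²/(γ(S−A)))·∂ₓ(S−A), where c_a² = kγ(ρ₀M/(S−A))^{γ−1}. Define the air energy E_a = M v²/2 + c_a² M/(γ(γ−1)) with v = D/M, and the air entropy flux H_a = (E_a + c_a² M/γ)·v. Then ∂ₜE_a + ∂ₓH_a = (c_a² M/(γ(S−A)))·∂ₜA. -/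

import Mathlib

open Real MeasureTheory

/-- Partial derivative with respect to the first (time) variable. -/
noncomputable def pt (f : ℝ → ℝ → ℝ) (t x : ℝ) : ℝ := deriv (fun s => f s x) t

/-- Partial derivative with respect to the second (space) variable. -/
noncomputable def px (f : ℝ → ℝ → ℝ) (t x : ℝ) : ℝ := deriv (fun y => f t y) x


private lemma aux_q (γ ρ₀ : ℝ) {m b : ℝ → ℝ} {t m' b' : ℝ} (hρ₀ : 0 < ρ₀)
    (hm : HasDerivAt m m' t) (hb : HasDerivAt b b' t)
    (hm0 : 0 < m t) (hb0 : 0 < b t) :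
    HasDerivAt (fun s => (ρ₀ * m s / b s) ^ (γ - 1))
      ((γ - 1) * (ρ₀ * m t / b t) ^ (γ - 2) * (ρ₀ * (m' * b t - m t * b') / b t ^ 2)) t := by
  have hr : HasDerivAt (fun s => ρ₀ * m s / b s)
      ((ρ₀ * m' * b t - ρ₀ * m t * b') / b t ^ 2) t := by
    exact (hm.const_mul ρ₀).div hb hb0.ne'
  have hpos : 0 < ρ₀ * m t / b t := by positivity
  have h := hr.rpow_const (p := γ - 1) (Or.inl hpos.ne')
  convert h using 1
  rw [show γ - 1 - 1 = γ - 2 from by ring]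
  ring

private lemma aux_E (γ k ρ₀ : ℝ) (hγ : 1 < γ) (hρ₀ : 0 < ρ₀) {m d b : ℝ → ℝ} {t m' d' b' : ℝ}
    (hm : HasDerivAt m m' t) (hd : HasDerivAt d d' t) (hb : HasDerivAt b b' t)
    (hm0 : 0 < m t) (hb0 : 0 < b t) :
    HasDerivAt (fun s => m s * (d s / m s) ^ 2 / 2
        + k * γ * (ρ₀ * m s / b s) ^ (γ - 1) * m s / (γ * (γ - 1)))
      ((2 * d t * d' * m t - d t ^ 2 * m') / (2 * m t ^ 2)
        + k / (γ - 1) * ((γ - 1) * (ρ₀ * m t / b t) ^ (γ - 2)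
            * (ρ₀ * (m' * b t - m t * b') / b t ^ 2) * m t
          + (ρ₀ * m t / b t) ^ (γ - 1) * m')) t := by
  have hq := aux_q γ ρ₀ hρ₀ hm hb hm0 hb0
  have h1 := (hm.mul ((hd.div hm hm0.ne').pow 2)).div_const 2
  have h2 := ((hq.const_mul (k * γ)).mul hm).div_const (γ * (γ - 1))
  have hγ1 : γ - 1 ≠ 0 := by linarith
  have hγ0 : γ ≠ 0 := by linarith
  refine HasDerivAt.congr_deriv (h1.add h2) ?_
  simp only [Pi.div_apply, Pi.pow_apply, Pi.mul_apply, Pi.add_apply, Nat.cast_ofNat, Nat.add_one_sub_one, pow_one]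
  have hmne := hm0.ne'
  have hbne := hb0.ne'
  field_simp
  ring

private lemma aux_H (γ k ρ₀ : ℝ) (hγ : 1 < γ) (hρ₀ : 0 < ρ₀) {m d b : ℝ → ℝ} {t m' d' b' : ℝ}
    (hm : HasDerivAt m m' t) (hd : HasDerivAt d d' t) (hb : HasDerivAt b b' t)
    (hm0 : 0 < m t) (hb0 : 0 < b t) :
    HasDerivAt (fun s => (m s * (d s / m s) ^ 2 / 2
        + k * γ * (ρ₀ * m s / b s) ^ (γ - 1) * m s / (γ * (γ - 1))
        + k * γ * (ρ₀ * m s / b s) ^ (γ - 1) * m s / γ) * (d s / m s))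
      (3 * d t ^ 2 * d' / (2 * m t ^ 2) - d t ^ 3 * m' / m t ^ 3
        + k * γ / (γ - 1) * ((γ - 1) * (ρ₀ * m t / b t) ^ (γ - 2)
            * (ρ₀ * (m' * b t - m t * b') / b t ^ 2) * d t
          + (ρ₀ * m t / b t) ^ (γ - 1) * d')) t := by
  have hq := aux_q γ ρ₀ hρ₀ hm hb hm0 hb0
  have hE := aux_E γ k ρ₀ hγ hρ₀ hm hd hb hm0 hb0
  have hP := ((hq.const_mul (k * γ)).mul hm).div_const γ
  have h := (hE.add hP).mul (hd.div hm hm0.ne')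
  have hγ1 : γ - 1 ≠ 0 := by linarith
  have hγ0 : γ ≠ 0 := by linarith
  refine HasDerivAt.congr_deriv h ?_
  simp only [Pi.div_apply, Pi.pow_apply, Pi.mul_apply, Pi.add_apply, Nat.cast_ofNat, Nat.add_one_sub_one, pow_one]
  have hmne := hm0.ne'
  have hbne := hb0.ne'
  field_simp
  ring

private lemma aux_F (γ k ρ₀ : ℝ) (hγ : 1 < γ) (hρ₀ : 0 < ρ₀) {m d b : ℝ → ℝ} {t m' d' b' : ℝ}
    (hm : HasDerivAt m m' t) (hd : HasDerivAt d d' t) (hb : HasDerivAt b b' t)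
    (hm0 : 0 < m t) (hb0 : 0 < b t) :
    HasDerivAt (fun s => d s ^ 2 / m s + m s * (k * γ * (ρ₀ * m s / b s) ^ (γ - 1)) / γ)
      ((2 * d t * d' * m t - d t ^ 2 * m') / m t ^ 2
        + k * ((γ - 1) * (ρ₀ * m t / b t) ^ (γ - 2)
            * (ρ₀ * (m' * b t - m t * b') / b t ^ 2) * m t
          + (ρ₀ * m t / b t) ^ (γ - 1) * m')) t := by
  have hq := aux_q γ ρ₀ hρ₀ hm hb hm0 hb0
  have h1 := (hd.pow 2).div hm hm0.ne'
  have h2 := (hm.mul (hq.const_mul (k * γ))).div_const γ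
  have hγ1 : γ - 1 ≠ 0 := by linarith
  have hγ0 : γ ≠ 0 := by linarith
  refine HasDerivAt.congr_deriv (h1.add h2) ?_
  simp only [Pi.div_apply, Pi.pow_apply, Pi.mul_apply, Pi.add_apply, Nat.cast_ofNat, Nat.add_one_sub_one, pow_one]
  have hmne := hm0.ne'
  have hbne := hb0.ne'
  field_simp
  ring

/-- for C¹ solutions of the air-layer equations, the air energy
`E_a = M v²/2 + c_a² M/(γ(γ-1))` and the air entropy flux
`H_a = (E_a + c_a² M/γ) v` satisfy
`∂ₜ E_a + ∂ₓ H_a = (c_a² M/(γ(S-A))) ∂ₜ A`. -/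
theorem air_energy_balance
    (γ k ρ₀ : ℝ) (hγ : 1 < γ) (hk : 0 < k) (hρ₀ : 0 < ρ₀)
    (S : ℝ → ℝ) (hSreg : ContDiff ℝ 1 S)
    (M D A : ℝ → ℝ → ℝ)
    (hMreg : ContDiff ℝ 1 (Function.uncurry M))
    (hDreg : ContDiff ℝ 1 (Function.uncurry D))
    (hAreg : ContDiff ℝ 1 (Function.uncurry A))
    (hMpos : ∀ t x, 0 < M t x)
    (hSA : ∀ t x, 0 < S x - A t x)
    (ca2 : ℝ → ℝ → ℝ)
    (hca2 : ∀ t x, ca2 t x = k * γ * (ρ₀ * M t x / (S x - A t x)) ^ (γ - 1))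
    (hmass : ∀ t x, pt M t x + px D t x = 0)
    (hmom : ∀ t x,
      pt D t x + px (fun t x => D t x ^ 2 / M t x + M t x * ca2 t x / γ) t x
        = M t x * ca2 t x / (γ * (S x - A t x)) * px (fun t x => S x - A t x) t x)
    (v : ℝ → ℝ → ℝ) (hv : ∀ t x, v t x = D t x / M t x)
    (Ea Ha : ℝ → ℝ → ℝ)
    (hEa : ∀ t x, Ea t x = M t x * v t x ^ 2 / 2
        + ca2 t x * M t x / (γ * (γ - 1)))
    (hHa : ∀ t x, Ha t x = (Ea t x + ca2 t x * M t x / γ) * v t x) :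
    ∀ t x, pt Ea t x + px Ha t x
      = ca2 t x * M t x / (γ * (S x - A t x)) * pt A t x := by
  intro t x
  have hm0 : 0 < M t x := hMpos t x
  have hb0 : 0 < S x - A t x := hSA t x
  have hγ1 : γ - 1 ≠ 0 := by linarith
  have hγ0 : γ ≠ 0 := by linarith
  have hmne : M t x ≠ 0 := ne_of_gt hm0
  have hbne : S x - A t x ≠ 0 := ne_of_gt hb0
  have key : ∀ (F : ℝ → ℝ → ℝ), ContDiff ℝ 1 (Function.uncurry F) →
      HasDerivAt (fun s => F s x) (pt F t x) t ∧ HasDerivAt (fun y => F t y) (px F t x) x := by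
    intro F hF
    have hd := hF.differentiable one_ne_zero
    constructor
    · have h1 : DifferentiableAt ℝ (fun s => F s x) t :=
        (hd (t, x)).comp (f := fun s => (s, x)) t (DifferentiableAt.prodMk differentiableAt_fun_id (differentiableAt_const x))
      exact h1.hasDerivAt
    · have h1 : DifferentiableAt ℝ (fun y => F t y) x :=
        (hd (t, x)).comp x (DifferentiableAt.prodMk (differentiableAt_const t) differentiableAt_id)
      exact h1.hasDerivAt
  obtain ⟨hMt, hMx⟩ := key M hMreg
  obtain ⟨hDt, hDx⟩ := key D hDreg
  obtain ⟨hAt, hAx⟩ := key A hAreg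
  have hSx : HasDerivAt S (deriv S x) x := ((hSreg.differentiable one_ne_zero) x).hasDerivAt
  have hBt : HasDerivAt (fun s => S x - A s x) (-pt A t x) t := hAt.const_sub (S x)
  have hBx : HasDerivAt (fun y => S y - A t y) (deriv S x - px A t x) x := hSx.sub hAx
  have hE : HasDerivAt (fun s => Ea s x)
      ((2 * D t x * pt D t x * M t x - D t x ^ 2 * pt M t x) / (2 * M t x ^ 2)
        + k / (γ - 1) * ((γ - 1) * (ρ₀ * M t x / (S x - A t x)) ^ (γ - 2)
            * (ρ₀ * (pt M t x * (S x - A t x) - M t x * -pt A t x) / (S x - A t x) ^ 2) * M t x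
          + (ρ₀ * M t x / (S x - A t x)) ^ (γ - 1) * pt M t x)) t := by
    have hfun : (fun s => Ea s x) = (fun s => M s x * (D s x / M s x) ^ 2 / 2
        + k * γ * (ρ₀ * M s x / (S x - A s x)) ^ (γ - 1) * M s x / (γ * (γ - 1))) :=
      funext fun s => by rw [hEa s x, hv s x, hca2 s x]
    rw [hfun]
    exact aux_E γ k ρ₀ hγ hρ₀ hMt hDt hBt hm0 hb0
  have hH : HasDerivAt (fun y => Ha t y)
      (3 * D t x ^ 2 * px D t x / (2 * M t x ^ 2) - D t x ^ 3 * px M t x / M t x ^ 3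
        + k * γ / (γ - 1) * ((γ - 1) * (ρ₀ * M t x / (S x - A t x)) ^ (γ - 2)
            * (ρ₀ * (px M t x * (S x - A t x) - M t x * (deriv S x - px A t x)) / (S x - A t x) ^ 2) * D t x
          + (ρ₀ * M t x / (S x - A t x)) ^ (γ - 1) * px D t x)) x := by
    have hfun : (fun y => Ha t y) = (fun y => (M t y * (D t y / M t y) ^ 2 / 2
        + k * γ * (ρ₀ * M t y / (S y - A t y)) ^ (γ - 1) * M t y / (γ * (γ - 1))
        + k * γ * (ρ₀ * M t y / (S y - A t y)) ^ (γ - 1) * M t y / γ) * (D t y / M t y)) :=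
      funext fun y => by rw [hHa t y, hEa t y, hca2 t y, hv t y]
    rw [hfun]
    exact aux_H γ k ρ₀ hγ hρ₀ hMx hDx hBx hm0 hb0
  have hF : HasDerivAt (fun y => D t y ^ 2 / M t y
        + M t y * (k * γ * (ρ₀ * M t y / (S y - A t y)) ^ (γ - 1)) / γ)
      ((2 * D t x * px D t x * M t x - D t x ^ 2 * px M t x) / M t x ^ 2
        + k * ((γ - 1) * (ρ₀ * M t x / (S x - A t x)) ^ (γ - 2)
            * (ρ₀ * (px M t x * (S x - A t x) - M t x * (deriv S x - px A t x)) / (S x - A t x) ^ 2) * M t x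
          + (ρ₀ * M t x / (S x - A t x)) ^ (γ - 1) * px M t x)) x :=
    aux_F γ k ρ₀ hγ hρ₀ hMx hDx hBx hm0 hb0
  have hmom' := hmom t x
  rw [show px (fun t x => D t x ^ 2 / M t x + M t x * ca2 t x / γ) t x
      = deriv (fun y => D t y ^ 2 / M t y + M t y * ca2 t y / γ) x from rfl] at hmom'
  rw [show (fun y => D t y ^ 2 / M t y + M t y * ca2 t y / γ)
      = fun y => D t y ^ 2 / M t y + M t y * (k * γ * (ρ₀ * M t y / (S y - A t y)) ^ (γ - 1)) / γ
      from funext fun y => by rw [hca2 t y]] at hmom'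
  rw [hF.deriv] at hmom'
  rw [show px (fun t x => S x - A t x) t x = deriv (fun y => S y - A t y) x from rfl,
    hBx.deriv, hca2 t x] at hmom'
  have hdt := eq_sub_of_add_eq hmom'
  have hmt : pt M t x = -px D t x := by have := hmass t x; linarith
  rw [show pt Ea t x = deriv (fun s => Ea s x) t from rfl,
    show px Ha t x = deriv (fun y => Ha t y) x from rfl,
    hE.deriv, hH.deriv, hca2 t x, hdt, hmt]
  have hr0 : (0:ℝ) < ρ₀ * M t x / (S x - A t x) := by positivity
  have hq1 : (ρ₀ * M t x / (S x - A t x)) ^ (γ - 1)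
      = (ρ₀ * M t x / (S x - A t x)) ^ (γ - 2) * (ρ₀ * M t x / (S x - A t x)) := by
    rw [show γ - 1 = γ - 2 + 1 from by ring, Real.rpow_add_one hr0.ne']
  rw [hq1]
  field_simp
  ring
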